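/- Let S ⊂ ℝ be a finite set and c : S → ℂ. Then the function f : ℝ → ℂ defined by f(ω) = i·ω − ∑_{Δ ∈ S} c_Δ · e^{−i·ω·Δ} has only finitely many zeros on ℝ; that is, the set {ω ∈ ℝ : f(ω) = 0} is finite. -/

import Mathlib

open Complex

/-- The function `f(ω) = iω - ∑_{Δ ∈ S} c_Δ e^{-iωΔ}` has only finitely many real zeros. -/
theorem shift_rule_characteristic_function_finite_zeros
    (S : Finset ℝ) (c : ℝ → ℂ) :
    {ω : ℝ | Complex.I * (ω : ℂ)
        - ∑ Δ ∈ S, c Δ * Complex.exp (-(Complex.I * (ω : ℂ) * (Δ : ℂ))) = 0}.Finite := by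
  set f : ℝ → ℂ := fun ω => Complex.I * (ω : ℂ)
      - ∑ Δ ∈ S, c Δ * Complex.exp (-(Complex.I * (ω : ℂ) * (Δ : ℂ))) with hf
  set M : ℝ := ∑ Δ ∈ S, ‖c Δ‖ with hM
  have hM0 : 0 ≤ M := Finset.sum_nonneg fun _ _ => norm_nonneg _
  -- analyticity
  have hA : AnalyticOnNhd ℝ f Set.univ := by
    intro x _
    apply AnalyticAt.sub
    · exact (analyticAt_const.mul (Complex.ofRealCLM.analyticAt x))
    · apply Finset.analyticAt_fun_sum
      intro Δ _
      exact analyticAt_const.mul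
        ((analyticAt_cexp.restrictScalars).comp
          ((analyticAt_const.mul (Complex.ofRealCLM.analyticAt x)).mul
            analyticAt_const).neg)
  -- zeros are bounded
  have hbound : ∀ ω : ℝ, f ω = 0 → |ω| ≤ M := by
    intro ω h
    have h1 : Complex.I * (ω : ℂ) = ∑ Δ ∈ S, c Δ * Complex.exp (-(Complex.I * (ω : ℂ) * (Δ : ℂ))) := by
      have := sub_eq_zero.mp h
      exact this
    have h2 : ‖Complex.I * (ω : ℂ)‖ = |ω| := by
      simp [norm_mul]
    calc |ω| = ‖Complex.I * (ω : ℂ)‖ := h2.symm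
      _ = ‖∑ Δ ∈ S, c Δ * Complex.exp (-(Complex.I * (ω : ℂ) * (Δ : ℂ)))‖ := congrArg norm h1
      _ ≤ ∑ Δ ∈ S, ‖c Δ * Complex.exp (-(Complex.I * (ω : ℂ) * (Δ : ℂ)))‖ := norm_sum_le _ _
      _ ≤ ∑ Δ ∈ S, ‖c Δ‖ := by
          apply Finset.sum_le_sum
          intro Δ _
          rw [norm_mul]
          have : ‖Complex.exp (-(Complex.I * (ω : ℂ) * (Δ : ℂ)))‖ = 1 := by
            rw [Complex.norm_exp]
            simp
          rw [this, mul_one]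
  -- suppose infinite
  by_contra hinf
  have hinf' : {ω : ℝ | f ω = 0}.Infinite := fun h => hinf h
  have hsub : {ω : ℝ | f ω = 0} ⊆ Set.Icc (-M) M := by
    intro ω hω
    exact abs_le.mp (hbound ω hω)
  obtain ⟨x, -, hx⟩ := hinf'.exists_accPt_of_subset_isCompact isCompact_Icc hsub
  have hfreq : ∃ᶠ y in nhdsWithin x {x}ᶜ, f y = 0 := by
    have := accPt_iff_frequently.mp hx
    rw [frequently_nhdsWithin_iff]
    exact this.mono fun y hy => ⟨hy.2, hy.1⟩
  have hzero : Set.EqOn f 0 Set.univ :=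
    hA.eqOn_zero_of_preconnected_of_frequently_eq_zero isPreconnected_univ
      (Set.mem_univ x) hfreq
  have := hbound (M + 1) (hzero (Set.mem_univ (M + 1)))
  rw [_root_.abs_of_nonneg (by linarith)] at this
  linarith
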